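/- arXiv:2601.04489 — 2 statements merged into one kernel-verified Lean document; each statement's English description precedes it below -/
import Mathlib

section
/- For all y=(y0,y',y'')∈ℝ^{2n+1} and every z0 with 0 < z0 < y0, one has the reproducing identity ∫_{ℝ^{2n}} K_0(z^{-1}·y) K_0(z) dz' dz'' = K_0(y), where z=(z0,z',z'') and z^{-1}·y denotes the group product of z^{-1}=−z with y. -/
open MeasureTheory Real Filter Topology

noncomputable section

/-- Points of `ℝ^(2n+1)`, written `y = (y₀, y', y'')`. -/
abbrev Pt (n : ℕ) : Type := ℝ × (Fin n → ℝ) × (Fin n → ℝ)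

/-- The heat kernel `G_t(w)` on `ℝⁿ`. -/
def heatG (n : ℕ) (t : ℝ) (w : Fin n → ℝ) : ℝ :=
  if 0 < t then (4 * π * t) ^ (-(n : ℝ) / 2) * Real.exp (-(∑ i, w i ^ 2) / (4 * t)) else 0

/-- `K₀(y) = G_{y₀}(y') ⬝ G_{y₀³/12}(y'')`. -/
def K0 (n : ℕ) (y : Pt n) : ℝ := heatG n y.1 y.2.1 * heatG n (y.1 ^ 3 / 12) y.2.2

/-- The vector field `Y₀ = ∂_{y₀} - (1/2) Σ_j y'_j ∂_{y''_j}`. -/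
def Y0 {n : ℕ} (φ : Pt n → ℝ) (y : Pt n) : ℝ :=
  fderiv ℝ φ y (1, 0, -(1 / 2 : ℝ) • y.2.1)

/-- The vector field `Y_j = ∂_{y'_j} + (1/2) y₀ ∂_{y''_j}`, `1 ≤ j ≤ n`. -/
def Yp {n : ℕ} (j : Fin n) (φ : Pt n → ℝ) (y : Pt n) : ℝ :=
  fderiv ℝ φ y (0, Pi.single j 1, (y.1 / 2) • (Pi.single j 1 : Fin n → ℝ))

/-- The vector field `Y_{n+j} = ∂_{y''_j}`, `1 ≤ j ≤ n`. -/
def Ypp {n : ℕ} (j : Fin n) (φ : Pt n → ℝ) (y : Pt n) : ℝ :=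
  fderiv ℝ φ y (0, 0, (Pi.single j 1 : Fin n → ℝ))

/-- The step-2 nilpotent group product on `ℝ^(2n+1)`:
`z ⬝ y = (y₀+z₀, y'+z', y''+z''+ (1/2) z₀ y' - (1/2) y₀ z')`. -/
def gmul {n : ℕ} (z y : Pt n) : Pt n :=
  (y.1 + z.1, y.2.1 + z.2.1, y.2.2 + z.2.2 + (z.1 / 2) • y.2.1 - (y.1 / 2) • z.2.1)

/-- The one-dimensional heat kernel. -/
def g1 (t x : ℝ) : ℝ := (Real.sqrt (4 * π * t))⁻¹ * Real.exp (-(x ^ 2) / (4 * t))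

lemma gauss_lin (S L M : ℝ) (hS : 0 < S) :
    ∫ z : ℝ, Real.exp (-(S * z ^ 2) + L * z + M)
      = Real.sqrt (π / S) * Real.exp (M + L ^ 2 / (4 * S)) := by
  have h : ∀ z : ℝ, -(S * z ^ 2) + L * z + M
      = -(S * (z - L / (2 * S)) ^ 2) + (M + L ^ 2 / (4 * S)) := by
    intro z; field_simp; ring
  simp_rw [h, Real.exp_add, integral_mul_const]
  rw [show (∫ z : ℝ, Real.exp (-(S * (z - L / (2 * S)) ^ 2)))
      = ∫ z : ℝ, Real.exp (-(S * z ^ 2)) from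
    integral_sub_right_eq_self (fun u => Real.exp (-(S * u ^ 2))) (L / (2 * S))]
  simp_rw [← neg_mul, integral_gaussian]

lemma g1_conv {s t : ℝ} (hs : 0 < s) (ht : 0 < t) (A : ℝ) :
    ∫ z : ℝ, g1 s (A - z) * g1 t z = g1 (s + t) A := by
  have hπ := Real.pi_pos
  have hSpos : (0:ℝ) < 1 / (4 * s) + 1 / (4 * t) := by positivity
  have key : ∀ z : ℝ, g1 s (A - z) * g1 t z
      = ((Real.sqrt (4 * π * s))⁻¹ * (Real.sqrt (4 * π * t))⁻¹)
        * Real.exp (-((1 / (4 * s) + 1 / (4 * t)) * z ^ 2) + (A / (2 * s)) * z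
            + (-(A ^ 2) / (4 * s))) := by
    intro z
    unfold g1
    rw [mul_mul_mul_comm, ← Real.exp_add]
    congr 1
    field_simp
    ring
  simp_rw [key, integral_const_mul, gauss_lin _ _ _ hSpos]
  rw [show -(A ^ 2) / (4 * s) + (A / (2 * s)) ^ 2 / (4 * (1 / (4 * s) + 1 / (4 * t)))
      = -(A ^ 2) / (4 * (s + t)) from by field_simp; ring]
  unfold g1
  rw [← mul_assoc]
  congr 1
  rw [← Real.sqrt_inv, ← Real.sqrt_inv, ← Real.sqrt_mul (by positivity),
    ← Real.sqrt_mul (by positivity), ← Real.sqrt_inv]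
  congr 1
  field_simp
  ring

lemma g1_triple {a b : ℝ} (ha : 0 < a) (hb : 0 < b) (Y c : ℝ) :
    ∫ z : ℝ, (g1 a (Y - z) * g1 b z) * g1 ((a ^ 3 + b ^ 3) / 12) (c + ((a + b) / 2) * z)
      = g1 (a + b) Y * g1 ((a + b) ^ 3 / 12) (c + (b / 2) * Y) := by
  have hπ := Real.pi_pos
  have hT : (0:ℝ) < (a ^ 3 + b ^ 3) / 12 := by positivity
  have h12 : (0:ℝ) < a ^ 3 + b ^ 3 := by positivity
  have hab : (0:ℝ) < a + b := by positivity
  have hSpos : (0:ℝ) < 1 / (4 * a) + 1 / (4 * b)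
      + ((a + b) / 2) ^ 2 / (4 * ((a ^ 3 + b ^ 3) / 12)) := by positivity
  have key : ∀ z : ℝ, (g1 a (Y - z) * g1 b z)
        * g1 ((a ^ 3 + b ^ 3) / 12) (c + ((a + b) / 2) * z)
      = ((Real.sqrt (4 * π * a))⁻¹ * (Real.sqrt (4 * π * b))⁻¹
            * (Real.sqrt (4 * π * ((a ^ 3 + b ^ 3) / 12)))⁻¹)
        * Real.exp (-((1 / (4 * a) + 1 / (4 * b)
              + ((a + b) / 2) ^ 2 / (4 * ((a ^ 3 + b ^ 3) / 12))) * z ^ 2)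
            + (Y / (2 * a) - ((a + b) / 2) * c / (2 * ((a ^ 3 + b ^ 3) / 12))) * z
            + (-(Y ^ 2) / (4 * a) + -(c ^ 2) / (4 * ((a ^ 3 + b ^ 3) / 12)))) := by
    intro z
    unfold g1
    rw [show ((Real.sqrt (4 * π * a))⁻¹ * Real.exp (-(Y - z) ^ 2 / (4 * a))
          * ((Real.sqrt (4 * π * b))⁻¹ * Real.exp (-z ^ 2 / (4 * b)))
          * ((Real.sqrt (4 * π * ((a ^ 3 + b ^ 3) / 12)))⁻¹
            * Real.exp (-(c + (a + b) / 2 * z) ^ 2 / (4 * ((a ^ 3 + b ^ 3) / 12)))))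
        = ((Real.sqrt (4 * π * a))⁻¹ * (Real.sqrt (4 * π * b))⁻¹
            * (Real.sqrt (4 * π * ((a ^ 3 + b ^ 3) / 12)))⁻¹)
          * (Real.exp (-(Y - z) ^ 2 / (4 * a)) * (Real.exp (-z ^ 2 / (4 * b))
            * Real.exp (-(c + (a + b) / 2 * z) ^ 2 / (4 * ((a ^ 3 + b ^ 3) / 12)))))
      from by ring, ← Real.exp_add, ← Real.exp_add]
    congr 2
    field_simp
    ring
  simp_rw [key, integral_const_mul, gauss_lin _ _ _ hSpos]
  have hexp : -(Y ^ 2) / (4 * a) + -(c ^ 2) / (4 * ((a ^ 3 + b ^ 3) / 12))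
      + (Y / (2 * a) - ((a + b) / 2) * c / (2 * ((a ^ 3 + b ^ 3) / 12))) ^ 2
          / (4 * (1 / (4 * a) + 1 / (4 * b)
              + ((a + b) / 2) ^ 2 / (4 * ((a ^ 3 + b ^ 3) / 12))))
      = -(Y ^ 2) / (4 * (a + b)) + -((c + (b / 2) * Y) ^ 2) / (4 * ((a + b) ^ 3 / 12)) := by
    field_simp
    ring
  rw [hexp]
  unfold g1
  rw [show (Real.sqrt (4 * π * (a + b)))⁻¹ * Real.exp (-Y ^ 2 / (4 * (a + b)))
        * ((Real.sqrt (4 * π * ((a + b) ^ 3 / 12)))⁻¹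
          * Real.exp (-(c + b / 2 * Y) ^ 2 / (4 * ((a + b) ^ 3 / 12))))
      = ((Real.sqrt (4 * π * (a + b)))⁻¹ * (Real.sqrt (4 * π * ((a + b) ^ 3 / 12)))⁻¹)
        * (Real.exp (-Y ^ 2 / (4 * (a + b)))
          * Real.exp (-(c + b / 2 * Y) ^ 2 / (4 * ((a + b) ^ 3 / 12)))) from by ring,
    ← Real.exp_add, ← mul_assoc]
  congr 1
  have pref : (Real.sqrt (4 * π * a))⁻¹ * (Real.sqrt (4 * π * b))⁻¹
        * (Real.sqrt (4 * π * ((a ^ 3 + b ^ 3) / 12)))⁻¹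
        * Real.sqrt (π / (1 / (4 * a) + 1 / (4 * b)
            + ((a + b) / 2) ^ 2 / (4 * ((a ^ 3 + b ^ 3) / 12))))
      = (Real.sqrt (4 * π * (a + b)))⁻¹ * (Real.sqrt (4 * π * ((a + b) ^ 3 / 12)))⁻¹ := by
    rw [← Real.sqrt_inv (4 * π * a), ← Real.sqrt_inv (4 * π * b),
      ← Real.sqrt_inv (4 * π * ((a ^ 3 + b ^ 3) / 12)),
      ← Real.sqrt_mul (by positivity) ((4 * π * b)⁻¹),
      ← Real.sqrt_mul (by positivity) ((4 * π * ((a ^ 3 + b ^ 3) / 12))⁻¹),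
      ← Real.sqrt_mul (by positivity) (π / _),
      ← Real.sqrt_inv (4 * π * (a + b)), ← Real.sqrt_inv (4 * π * ((a + b) ^ 3 / 12)),
      ← Real.sqrt_mul (by positivity) ((4 * π * ((a + b) ^ 3 / 12))⁻¹)]
    congr 1
    field_simp
    ring
  rw [← pref]

lemma heatG_eq_prod {n : ℕ} {t : ℝ} (ht : 0 < t) (w : Fin n → ℝ) :
    heatG n t w = ∏ i, g1 t (w i) := by
  have hπ := Real.pi_pos
  have h4 : (0:ℝ) < 4 * π * t := by positivity
  unfold heatG g1
  rw [if_pos ht]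
  have h1 : (4 * π * t) ^ (-(n : ℝ) / 2) = ((Real.sqrt (4 * π * t))⁻¹) ^ n := by
    rw [Real.sqrt_eq_rpow, ← Real.rpow_neg_one ((4 * π * t) ^ ((1:ℝ)/2)),
      ← Real.rpow_natCast (((4 * π * t) ^ ((1:ℝ)/2)) ^ (-1:ℝ)) n,
      ← Real.rpow_mul h4.le, ← Real.rpow_mul h4.le]
    norm_num
    congr 1
    ring
  have h2 : Real.exp (-(∑ i, w i ^ 2) / (4 * t)) = ∏ i, Real.exp (-(w i ^ 2) / (4 * t)) := by
    rw [← Real.exp_sum]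
    congr 1
    rw [← Finset.sum_div, ← Finset.sum_neg_distrib]
  rw [h1, h2, Finset.prod_mul_distrib, Finset.prod_const, Finset.card_univ, Fintype.card_fin]

lemma heatG_nonneg (n : ℕ) (t : ℝ) (w : Fin n → ℝ) : 0 ≤ heatG n t w := by
  unfold heatG
  split
  · positivity
  · exact le_refl 0

lemma heatG_le {n : ℕ} {t : ℝ} (ht : 0 < t) (w : Fin n → ℝ) :
    heatG n t w ≤ (4 * π * t) ^ (-(n : ℝ) / 2) := by
  have hπ := Real.pi_pos
  unfold heatG
  rw [if_pos ht]
  have h : Real.exp (-(∑ i, w i ^ 2) / (4 * t)) ≤ 1 := by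
    apply Real.exp_le_one_iff.mpr
    apply div_nonpos_of_nonpos_of_nonneg
    · simp only [neg_nonpos]
      positivity
    · positivity
  calc (4 * π * t) ^ (-(n : ℝ) / 2) * Real.exp (-(∑ i, w i ^ 2) / (4 * t))
      ≤ (4 * π * t) ^ (-(n : ℝ) / 2) * 1 := by
        apply mul_le_mul_of_nonneg_left h (by positivity)
    _ = _ := mul_one _

lemma integrable_g1 {t : ℝ} (ht : 0 < t) : Integrable (g1 t) := by
  have h : g1 t = fun x => (Real.sqrt (4 * π * t))⁻¹ * Real.exp (-(1/(4*t)) * x ^ 2) := by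
    funext x; unfold g1; congr 1; ring
  rw [h]
  exact (integrable_exp_neg_mul_sq (by positivity)).const_mul _

lemma integrable_heatG {n : ℕ} {t : ℝ} (ht : 0 < t) : Integrable (heatG n t) := by
  have h : heatG n t = fun w : Fin n → ℝ => ∏ i, g1 t (w i) := funext (heatG_eq_prod ht)
  rw [h]
  exact Integrable.fintype_prod (fun _ => integrable_g1 ht)

lemma continuous_heatG {n : ℕ} {t : ℝ} (ht : 0 < t) : Continuous (heatG n t) := by
  have h : heatG n t = fun w : Fin n → ℝ =>
      (4 * π * t) ^ (-(n : ℝ) / 2) * Real.exp (-(∑ i, w i ^ 2) / (4 * t)) := by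
    funext w; unfold heatG; rw [if_pos ht]
  rw [h]
  fun_prop

lemma heatG_conv {n : ℕ} {s t : ℝ} (hs : 0 < s) (ht : 0 < t) (A : Fin n → ℝ) :
    ∫ z : Fin n → ℝ, heatG n s (A - z) * heatG n t z = heatG n (s + t) A := by
  have h : ∀ z : Fin n → ℝ, heatG n s (A - z) * heatG n t z
      = ∏ i, (g1 s (A i - z i) * g1 t (z i)) := by
    intro z
    rw [heatG_eq_prod hs, heatG_eq_prod ht, ← Finset.prod_mul_distrib]
    simp [Pi.sub_apply]
  simp_rw [h]
  rw [MeasureTheory.integral_fintype_prod_volume_eq_prod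
    (f := fun i u => g1 s (A i - u) * g1 t u)]
  rw [heatG_eq_prod (by positivity) A]
  exact Finset.prod_congr rfl fun i _ => g1_conv hs ht (A i)

lemma heatG_triple {n : ℕ} {a b : ℝ} (ha : 0 < a) (hb : 0 < b) (Y C : Fin n → ℝ) :
    ∫ z : Fin n → ℝ, (heatG n a (Y - z) * heatG n b z)
        * heatG n ((a ^ 3 + b ^ 3) / 12) (C + ((a + b) / 2) • z)
      = heatG n (a + b) Y * heatG n ((a + b) ^ 3 / 12) (C + (b / 2) • Y) := by
  have hT : (0:ℝ) < (a ^ 3 + b ^ 3) / 12 := by positivity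
  have h : ∀ z : Fin n → ℝ, (heatG n a (Y - z) * heatG n b z)
        * heatG n ((a ^ 3 + b ^ 3) / 12) (C + ((a + b) / 2) • z)
      = ∏ i, ((g1 a (Y i - z i) * g1 b (z i))
          * g1 ((a ^ 3 + b ^ 3) / 12) (C i + ((a + b) / 2) * z i)) := by
    intro z
    rw [heatG_eq_prod ha, heatG_eq_prod hb, heatG_eq_prod hT,
      ← Finset.prod_mul_distrib, ← Finset.prod_mul_distrib]
    simp [Pi.sub_apply, Pi.add_apply, Pi.smul_apply, smul_eq_mul]
  simp_rw [h]
  rw [MeasureTheory.integral_fintype_prod_volume_eq_prod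
    (f := fun i u => (g1 a (Y i - u) * g1 b u)
      * g1 ((a ^ 3 + b ^ 3) / 12) (C i + ((a + b) / 2) * u))]
  rw [heatG_eq_prod (by positivity) Y, heatG_eq_prod (by positivity) (C + (b / 2) • Y),
    ← Finset.prod_mul_distrib]
  refine Finset.prod_congr rfl fun i _ => ?_
  rw [g1_triple ha hb (Y i) (C i)]
  simp [Pi.add_apply, Pi.smul_apply, smul_eq_mul]

/-- The reproducing identity: for `0 < z₀ < y₀`,
`∫ K₀(z⁻¹⬝y) K₀(z) dz' dz'' = K₀(y)`, where `z = (z₀,z',z'')` and `z⁻¹ = -z`. -/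
theorem statement2 (n : ℕ) (y : Pt n) (z0 : ℝ) (h0 : 0 < z0) (h1 : z0 < y.1) :
    ∫ z : (Fin n → ℝ) × (Fin n → ℝ),
        K0 n (gmul (-(z0, z.1, z.2)) y) * K0 n (z0, z.1, z.2)
      = K0 n y := by
  have hπ := Real.pi_pos
  set a := y.1 - z0 with hadef
  have ha : 0 < a := sub_pos.mpr h1
  have hy : 0 < y.1 := h0.trans h1
  have hs : (0:ℝ) < a ^ 3 / 12 := by positivity
  have ht : (0:ℝ) < z0 ^ 3 / 12 := by positivity
  set C : Fin n → ℝ := y.2.2 - (z0 / 2) • y.2.1 with hC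
  have hF : ∀ z : (Fin n → ℝ) × (Fin n → ℝ),
      K0 n (gmul (-(z0, z.1, z.2)) y) * K0 n (z0, z.1, z.2)
      = (heatG n a (y.2.1 - z.1) * heatG n z0 z.1)
        * (heatG n (a ^ 3 / 12) ((C + (y.1 / 2) • z.1) - z.2)
          * heatG n (z0 ^ 3 / 12) z.2) := by
    intro z
    unfold K0 gmul
    simp only [Prod.neg_mk, Prod.fst, Prod.snd]
    rw [show y.1 + -z0 = a from by rw [hadef]; ring,
      show y.2.1 + -z.1 = y.2.1 - z.1 from by rw [sub_eq_add_neg],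
      show y.2.2 + -z.2 + (-z0 / 2) • y.2.1 - (y.1 / 2) • (-z.1)
        = (C + (y.1 / 2) • z.1) - z.2 from by rw [hC]; module]
    ring
  rw [integral_congr_ae (Filter.Eventually.of_forall hF), Measure.volume_eq_prod,
    MeasureTheory.integral_prod]
  · have inner : ∀ z1 : Fin n → ℝ,
        (∫ z2 : Fin n → ℝ, (heatG n a (y.2.1 - z1) * heatG n z0 z1)
          * (heatG n (a ^ 3 / 12) ((C + (y.1 / 2) • z1) - z2) * heatG n (z0 ^ 3 / 12) z2))
        = (heatG n a (y.2.1 - z1) * heatG n z0 z1)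
            * heatG n ((a ^ 3 + z0 ^ 3) / 12) (C + (y.1 / 2) • z1) := by
      intro z1
      rw [integral_const_mul, heatG_conv hs ht,
        show a ^ 3 / 12 + z0 ^ 3 / 12 = (a ^ 3 + z0 ^ 3) / 12 from by ring]
    simp_rw [inner]
    have hy1 : y.1 = a + z0 := by rw [hadef]; ring
    have h2 : (y.1 / 2 : ℝ) = (a + z0) / 2 := by rw [hy1]
    simp_rw [h2, heatG_triple ha h0 y.2.1 C]
    rw [← hy1, show C + (z0 / 2) • y.2.1 = y.2.2 from by rw [hC]; module]
    rfl
  · -- integrability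
    have hcont : Continuous fun z : (Fin n → ℝ) × (Fin n → ℝ) =>
        (heatG n a (y.2.1 - z.1) * heatG n z0 z.1)
        * (heatG n (a ^ 3 / 12) ((C + (y.1 / 2) • z.1) - z.2)
          * heatG n (z0 ^ 3 / 12) z.2) := by
      apply Continuous.mul
      · exact ((continuous_heatG ha).comp (by fun_prop)).mul
          ((continuous_heatG h0).comp continuous_fst)
      · exact ((continuous_heatG hs).comp (by fun_prop)).mul
          ((continuous_heatG ht).comp continuous_snd)
    have hbint : Integrable (fun z : (Fin n → ℝ) × (Fin n → ℝ) =>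
        ((4 * π * a) ^ (-(n : ℝ) / 2) * (4 * π * (a ^ 3 / 12)) ^ (-(n : ℝ) / 2))
          * (heatG n z0 z.1 * heatG n (z0 ^ 3 / 12) z.2)) (volume.prod volume) := by
      exact (Integrable.mul_prod (integrable_heatG h0) (integrable_heatG ht)).const_mul _
    apply Integrable.mono' hbint hcont.aestronglyMeasurable
    apply Filter.Eventually.of_forall
    intro z
    rw [Real.norm_eq_abs, abs_of_nonneg (by
      exact mul_nonneg (mul_nonneg (heatG_nonneg _ _ _) (heatG_nonneg _ _ _))
        (mul_nonneg (heatG_nonneg _ _ _) (heatG_nonneg _ _ _)))]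
    have b1 := heatG_le ha (y.2.1 - z.1)
    have b2 := heatG_le hs ((C + (y.1 / 2) • z.1) - z.2)
    calc (heatG n a (y.2.1 - z.1) * heatG n z0 z.1)
          * (heatG n (a ^ 3 / 12) ((C + (y.1 / 2) • z.1) - z.2) * heatG n (z0 ^ 3 / 12) z.2)
        ≤ ((4 * π * a) ^ (-(n : ℝ) / 2) * heatG n z0 z.1)
          * ((4 * π * (a ^ 3 / 12)) ^ (-(n : ℝ) / 2) * heatG n (z0 ^ 3 / 12) z.2) := by
          apply mul_le_mul
          · exact mul_le_mul_of_nonneg_right b1 (heatG_nonneg _ _ _)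
          · exact mul_le_mul_of_nonneg_right b2 (heatG_nonneg _ _ _)
          · exact mul_nonneg (heatG_nonneg _ _ _) (heatG_nonneg _ _ _)
          · exact mul_nonneg (by positivity) (heatG_nonneg _ _ _)
      _ = ((4 * π * a) ^ (-(n : ℝ) / 2) * (4 * π * (a ^ 3 / 12)) ^ (-(n : ℝ) / 2))
          * (heatG n z0 z.1 * heatG n (z0 ^ 3 / 12) z.2) := by ring

end
end

section
/- Let f ∈ C([0,∞)) and F(t) = ∫_0^t f(s) ds. Then for every y=(y0,y',y'')∈ℝ^{2n+1} with y0 > 0, ∫_{ℝ^{2n+1}} K_0(z^{-1}·y) f(z0) K_0(z) dz = F(y0)·K_0(y), where the integrand is supported in {0 < z0 < y0} since K_0 vanishes for nonpositive time variable. -/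
open MeasureTheory Real Filter Topology

noncomputable section

namespace S3Aux

/-- 1D heat kernel without time cutoff. -/
def g (t x : ℝ) : ℝ := (4 * π * t) ^ (-(1:ℝ)/2) * Real.exp (-(x^2) / (4*t))

lemma quad_sq (α β γ : ℝ) (hα : 0 < α) (u : ℝ) :
    -(α*u^2 + β*u + γ) = (β^2/(4*α) - γ) + (-α * (u + β/(2*α))^2) := by
  field_simp; ring

lemma exp_quad_integrable (α β γ : ℝ) (hα : 0 < α) :
    Integrable (fun u : ℝ => Real.exp (-(α*u^2 + β*u + γ))) := by
  simp_rw [quad_sq α β γ hα, Real.exp_add]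
  exact ((integrable_exp_neg_mul_sq hα).comp_add_right (β/(2*α))).const_mul _

lemma exp_quad_integral (α β γ : ℝ) (hα : 0 < α) :
    ∫ u : ℝ, Real.exp (-(α*u^2 + β*u + γ))
      = Real.sqrt (π/α) * Real.exp (β^2/(4*α) - γ) := by
  simp_rw [quad_sq α β γ hα, Real.exp_add]
  rw [integral_const_mul,
    integral_add_right_eq_self (fun u => Real.exp (-α * u^2)) (β/(2*α)),
    integral_gaussian, mul_comm]




lemma rpow_neg_half {x : ℝ} (hx : 0 < x) : x ^ (-(1:ℝ)/2) = (Real.sqrt x)⁻¹ := by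
  rw [Real.sqrt_eq_rpow, ← Real.rpow_neg hx.le]
  norm_num

lemma const2 {A B C α : ℝ} (hA : 0 < A) (hB : 0 < B) (hC : 0 < C) (hα : 0 < α)
    (h : π / α = A * B / C) :
    A ^ (-(1:ℝ)/2) * B ^ (-(1:ℝ)/2) * Real.sqrt (π/α) = C ^ (-(1:ℝ)/2) := by
  have sA := Real.sqrt_pos.mpr hA
  have sB := Real.sqrt_pos.mpr hB
  have sC := Real.sqrt_pos.mpr hC
  rw [rpow_neg_half hA, rpow_neg_half hB, rpow_neg_half hC, h,
    Real.sqrt_div (by positivity) C, Real.sqrt_mul hA.le]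
  field_simp

lemma const3 {A B D C1 C2 α : ℝ} (hA : 0 < A) (hB : 0 < B) (hD : 0 < D)
    (hC1 : 0 < C1) (hC2 : 0 < C2) (hα : 0 < α)
    (h : π / α = A * B * D / (C1 * C2)) :
    A ^ (-(1:ℝ)/2) * B ^ (-(1:ℝ)/2) * D ^ (-(1:ℝ)/2) * Real.sqrt (π/α)
      = C1 ^ (-(1:ℝ)/2) * C2 ^ (-(1:ℝ)/2) := by
  have sA := Real.sqrt_pos.mpr hA
  have sB := Real.sqrt_pos.mpr hB
  have sD := Real.sqrt_pos.mpr hD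
  have sC1 := Real.sqrt_pos.mpr hC1
  have sC2 := Real.sqrt_pos.mpr hC2
  rw [rpow_neg_half hA, rpow_neg_half hB, rpow_neg_half hD, rpow_neg_half hC1,
    rpow_neg_half hC2, h, Real.sqrt_div (by positivity) _, Real.sqrt_mul (by positivity),
    Real.sqrt_mul hA.le, Real.sqrt_mul (by positivity) C2]
  field_simp




lemma g_nonneg {t x : ℝ} (ht : 0 < t) : 0 ≤ g t x := by
  unfold g; positivity

lemma integrable_g {t : ℝ} (ht : 0 < t) (c : ℝ) :
    Integrable (fun x : ℝ => g t (c - x)) := by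
  have h : ∀ x : ℝ, g t (c - x)
      = (4*π*t) ^ (-(1:ℝ)/2) * Real.exp (-((1/(4*t))*x^2 + (-(c/(2*t)))*x + c^2/(4*t))) := by
    intro x; unfold g; congr 1; congr 1; field_simp; ring
  simp_rw [h]
  exact (exp_quad_integrable _ _ _ (by positivity)).const_mul _

lemma g_conv_expand {T1 T2 : ℝ} (h1 : 0 < T1) (h2 : 0 < T2) (c w : ℝ) :
    g T1 (c - w) * g T2 w
      = ((4*π*T1) ^ (-(1:ℝ)/2) * (4*π*T2) ^ (-(1:ℝ)/2)) *
        Real.exp (-((1/(4*T1) + 1/(4*T2))*w^2 + (-(c/(2*T1)))*w + c^2/(4*T1))) := by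
  unfold g
  rw [mul_mul_mul_comm, ← Real.exp_add]
  congr 1
  field_simp
  ring

lemma integrable_g_conv {T1 T2 : ℝ} (h1 : 0 < T1) (h2 : 0 < T2) (c : ℝ) :
    Integrable (fun w : ℝ => g T1 (c - w) * g T2 w) := by
  simp_rw [g_conv_expand h1 h2 c]
  exact (exp_quad_integrable _ _ _ (by positivity)).const_mul _

lemma g_conv {T1 T2 : ℝ} (h1 : 0 < T1) (h2 : 0 < T2) (c : ℝ) :
    ∫ w : ℝ, g T1 (c - w) * g T2 w = g (T1 + T2) c := by
  have hα : 0 < 1/(4*T1) + 1/(4*T2) := by positivity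
  simp_rw [g_conv_expand h1 h2 c]
  rw [integral_const_mul, exp_quad_integral _ _ _ hα]
  unfold g
  have hE : (-(c/(2*T1)))^2/(4*(1/(4*T1) + 1/(4*T2))) - c^2/(4*T1)
      = -(c^2) / (4*(T1+T2)) := by field_simp; ring
  have hC : (4*π*T1) ^ (-(1:ℝ)/2) * (4*π*T2) ^ (-(1:ℝ)/2)
        * Real.sqrt (π/(1/(4*T1) + 1/(4*T2))) = (4*π*(T1+T2)) ^ (-(1:ℝ)/2) := by
    refine const2 (by positivity) (by positivity) (by positivity) hα ?_
    field_simp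
    ring
  rw [hE, ← hC]
  ring

lemma g_triple_expand {s y0 : ℝ} (hs : 0 < s) (hsy : s < y0) (a b u : ℝ) :
    g (y0 - s) (a - u) * g s u * g ((s^3 + (y0-s)^3)/12) (b - (s/2)*a + (y0/2)*u)
      = ((4*π*(y0-s)) ^ (-(1:ℝ)/2) * (4*π*s) ^ (-(1:ℝ)/2)
          * (4*π*((s^3 + (y0-s)^3)/12)) ^ (-(1:ℝ)/2)) *
        Real.exp (-((1/(4*(y0-s)) + 1/(4*s) + y0^2/(16*((s^3 + (y0-s)^3)/12)))*u^2
          + (-(a/(2*(y0-s))) + (b - (s/2)*a)*y0/(4*((s^3 + (y0-s)^3)/12)))*u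
          + (a^2/(4*(y0-s)) + (b - (s/2)*a)^2/(4*((s^3 + (y0-s)^3)/12))))) := by
  have ht : 0 < y0 - s := by linarith
  have hT : 0 < (s^3 + (y0-s)^3)/12 := by positivity
  unfold g
  calc (4*π*(y0-s)) ^ (-(1:ℝ)/2) * Real.exp (-(a-u)^2/(4*(y0-s)))
        * ((4*π*s) ^ (-(1:ℝ)/2) * Real.exp (-u^2/(4*s)))
        * ((4*π*((s^3 + (y0-s)^3)/12)) ^ (-(1:ℝ)/2)
          * Real.exp (-(b - (s/2)*a + (y0/2)*u)^2/(4*((s^3 + (y0-s)^3)/12))))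
      = ((4*π*(y0-s)) ^ (-(1:ℝ)/2) * (4*π*s) ^ (-(1:ℝ)/2)
          * (4*π*((s^3 + (y0-s)^3)/12)) ^ (-(1:ℝ)/2)) *
        (Real.exp (-(a-u)^2/(4*(y0-s)) + (-u^2/(4*s))
          + (-(b - (s/2)*a + (y0/2)*u)^2/(4*((s^3 + (y0-s)^3)/12))))) := by
        rw [Real.exp_add, Real.exp_add]; ring
    _ = _ := by
        congr 1
        congr 1
        field_simp
        ring

lemma integrable_g_triple {s y0 : ℝ} (hs : 0 < s) (hsy : s < y0) (a b : ℝ) :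
    Integrable (fun u : ℝ =>
      g (y0 - s) (a - u) * g s u * g ((s^3 + (y0-s)^3)/12) (b - (s/2)*a + (y0/2)*u)) := by
  have ht : 0 < y0 - s := by linarith
  have hT : 0 < (s^3 + (y0-s)^3)/12 := by positivity
  simp_rw [g_triple_expand hs hsy a b]
  exact (exp_quad_integrable _ _ _ (by positivity)).const_mul _

lemma g_triple {s y0 : ℝ} (hs : 0 < s) (hsy : s < y0) (a b : ℝ) :
    ∫ u : ℝ, g (y0 - s) (a - u) * g s u
        * g ((s^3 + (y0-s)^3)/12) (b - (s/2)*a + (y0/2)*u)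
      = g y0 a * g (y0^3/12) b := by
  have ht : 0 < y0 - s := by linarith
  have hy0 : 0 < y0 := hs.trans hsy
  have hT : 0 < (s^3 + (y0-s)^3)/12 := by positivity
  have hα : 0 < 1/(4*(y0-s)) + 1/(4*s) + y0^2/(16*((s^3 + (y0-s)^3)/12)) := by positivity
  simp_rw [g_triple_expand hs hsy a b]
  rw [integral_const_mul, exp_quad_integral _ _ _ hα]
  have hE : (-(a/(2*(y0-s))) + (b - (s/2)*a)*y0/(4*((s^3 + (y0-s)^3)/12)))^2
        / (4*(1/(4*(y0-s)) + 1/(4*s) + y0^2/(16*((s^3 + (y0-s)^3)/12))))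
        - (a^2/(4*(y0-s)) + (b - (s/2)*a)^2/(4*((s^3 + (y0-s)^3)/12)))
      = -(a^2)/(4*y0) + -(b^2)/(4*(y0^3/12)) := by
    field_simp
    ring
  have hC : (4*π*(y0-s)) ^ (-(1:ℝ)/2) * (4*π*s) ^ (-(1:ℝ)/2)
        * (4*π*((s^3 + (y0-s)^3)/12)) ^ (-(1:ℝ)/2)
        * Real.sqrt (π/(1/(4*(y0-s)) + 1/(4*s) + y0^2/(16*((s^3 + (y0-s)^3)/12))))
      = (4*π*y0) ^ (-(1:ℝ)/2) * (4*π*(y0^3/12)) ^ (-(1:ℝ)/2) := by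
    refine const3 (by positivity) (by positivity) (by positivity) (by positivity)
      (by positivity) hα ?_
    field_simp
    ring
  rw [hE]
  unfold g
  rw [Real.exp_add]
  linear_combination (Real.exp (-(a^2)/(4*y0)) * Real.exp (-(b^2)/(4*(y0^3/12)))) * hC

lemma heatG_nonneg (n : ℕ) (t : ℝ) (w : Fin n → ℝ) : 0 ≤ heatG n t w := by
  unfold heatG
  split_ifs with ht
  · positivity
  · exact le_refl _

lemma heatG_of_nonpos {n : ℕ} {t : ℝ} (h : t ≤ 0) (w : Fin n → ℝ) : heatG n t w = 0 :=
  if_neg (not_lt.mpr h)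

lemma heatG_le {n : ℕ} {t : ℝ} (ht : 0 < t) (w : Fin n → ℝ) :
    heatG n t w ≤ (4 * π * t) ^ (-(n : ℝ) / 2) := by
  rw [heatG, if_pos ht]
  have h1 : Real.exp (-(∑ i, w i ^ 2) / (4 * t)) ≤ 1 := by
    rw [Real.exp_le_one_iff]
    have : 0 ≤ ∑ i, w i ^ 2 := by positivity
    have h4t : 0 < 4 * t := by linarith
    apply div_nonpos_of_nonpos_of_nonneg <;> linarith
  have h2 : (0:ℝ) ≤ (4 * π * t) ^ (-(n : ℝ) / 2) := by positivity
  calc (4 * π * t) ^ (-(n : ℝ) / 2) * Real.exp (-(∑ i, w i ^ 2) / (4 * t))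
      ≤ (4 * π * t) ^ (-(n : ℝ) / 2) * 1 := by
        exact mul_le_mul_of_nonneg_left h1 h2
    _ = _ := mul_one _

lemma heatG_eq_prod {n : ℕ} {t : ℝ} (ht : 0 < t) (w : Fin n → ℝ) :
    heatG n t w = ∏ i, g t (w i) := by
  rw [heatG, if_pos ht]
  unfold g
  rw [Finset.prod_mul_distrib, Finset.prod_const, ← Real.exp_sum]
  congr 1
  · rw [Finset.card_univ, Fintype.card_fin,
      ← Real.rpow_natCast ((4*π*t) ^ (-(1:ℝ)/2)) n, ← Real.rpow_mul (by positivity)]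
    congr 1
    push_cast
    ring
  · rw [← Finset.sum_div, ← Finset.sum_neg_distrib]

lemma heatG_conv_pt {n : ℕ} {T1 T2 : ℝ} (h1 : 0 < T1) (h2 : 0 < T2) (c w : Fin n → ℝ) :
    heatG n T1 (c - w) * heatG n T2 w = ∏ i, (g T1 (c i - w i) * g T2 (w i)) := by
  rw [heatG_eq_prod h1, heatG_eq_prod h2, ← Finset.prod_mul_distrib]
  exact Finset.prod_congr rfl fun i _ => by rw [Pi.sub_apply]

lemma heatG_conv {n : ℕ} {T1 T2 : ℝ} (h1 : 0 < T1) (h2 : 0 < T2) (c : Fin n → ℝ) :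
    ∫ w : Fin n → ℝ, heatG n T1 (c - w) * heatG n T2 w = heatG n (T1 + T2) c := by
  simp_rw [heatG_conv_pt h1 h2 c]
  rw [MeasureTheory.volume_pi, MeasureTheory.integral_fintype_prod_eq_prod
    (f := fun i x => g T1 (c i - x) * g T2 x), heatG_eq_prod (by positivity)]
  exact Finset.prod_congr rfl fun i _ => g_conv h1 h2 (c i)

lemma integrable_heatG_conv {n : ℕ} {T1 T2 : ℝ} (h1 : 0 < T1) (h2 : 0 < T2) (c : Fin n → ℝ) :
    Integrable (fun w : Fin n → ℝ => heatG n T1 (c - w) * heatG n T2 w) := by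
  simp_rw [heatG_conv_pt h1 h2 c]
  exact Integrable.fintype_prod (f := fun i x => g T1 (c i - x) * g T2 x)
    fun i => integrable_g_conv h1 h2 (c i)

lemma integrable_heatG_pair {n : ℕ} {t1 t2 : ℝ} (h1 : 0 < t1) (h2 : 0 < t2) (a : Fin n → ℝ) :
    Integrable (fun u : Fin n → ℝ => heatG n t1 (a - u) * heatG n t2 u) := by
  simp_rw [heatG_conv_pt h1 h2 a]
  exact Integrable.fintype_prod (f := fun i x => g t1 (a i - x) * g t2 x)
    fun i => integrable_g_conv h1 h2 (a i)

lemma integrable_heatG {n : ℕ} {t : ℝ} (ht : 0 < t) :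
    Integrable (fun w : Fin n → ℝ => heatG n t w) := by
  have h : ∀ w : Fin n → ℝ, heatG n t w = ∏ i, g t (0 - w i) := by
    intro w
    rw [heatG_eq_prod ht]
    refine Finset.prod_congr rfl fun i _ => ?_
    rw [zero_sub]
    unfold g
    rw [neg_pow]
    norm_num
  simp_rw [h]
  exact Integrable.fintype_prod (f := fun _ x => g t (0 - x)) fun i => integrable_g ht 0

lemma heatG_triple {n : ℕ} {s y0 : ℝ} (hs : 0 < s) (hsy : s < y0) (a b : Fin n → ℝ) :
    ∫ u : Fin n → ℝ, heatG n (y0 - s) (a - u) * heatG n s u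
        * heatG n ((s^3 + (y0-s)^3)/12)
          (fun i => b i - (s/2) * a i + (y0/2) * u i)
      = heatG n y0 a * heatG n (y0^3/12) b := by
  have ht : 0 < y0 - s := by linarith
  have hy0 : 0 < y0 := hs.trans hsy
  have hT : 0 < (s^3 + (y0-s)^3)/12 := by positivity
  have hpt : ∀ u : Fin n → ℝ, heatG n (y0 - s) (a - u) * heatG n s u
      * heatG n ((s^3 + (y0-s)^3)/12) (fun i => b i - (s/2) * a i + (y0/2) * u i)
      = ∏ i, (g (y0-s) (a i - u i) * g s (u i)
          * g ((s^3 + (y0-s)^3)/12) (b i - (s/2) * a i + (y0/2) * u i)) := by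
    intro u
    rw [heatG_eq_prod ht, heatG_eq_prod hs, heatG_eq_prod hT, ← Finset.prod_mul_distrib,
      ← Finset.prod_mul_distrib]
    exact Finset.prod_congr rfl fun i _ => by rw [Pi.sub_apply]
  simp_rw [hpt]
  rw [MeasureTheory.volume_pi, MeasureTheory.integral_fintype_prod_eq_prod
    (f := fun i x => g (y0-s) (a i - x) * g s x
      * g ((s^3 + (y0-s)^3)/12) (b i - (s/2) * a i + (y0/2) * x)),
    heatG_eq_prod hy0, heatG_eq_prod (by positivity), ← Finset.prod_mul_distrib]
  exact Finset.prod_congr rfl fun i _ => g_triple hs hsy (a i) (b i)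

lemma integrable_heatG_triple {n : ℕ} {s y0 : ℝ} (hs : 0 < s) (hsy : s < y0) (a b : Fin n → ℝ) :
    Integrable (fun u : Fin n → ℝ => heatG n (y0 - s) (a - u) * heatG n s u
        * heatG n ((s^3 + (y0-s)^3)/12) (fun i => b i - (s/2) * a i + (y0/2) * u i)) := by
  have ht : 0 < y0 - s := by linarith
  have hT : 0 < (s^3 + (y0-s)^3)/12 := by positivity
  have hpt : ∀ u : Fin n → ℝ, heatG n (y0 - s) (a - u) * heatG n s u
      * heatG n ((s^3 + (y0-s)^3)/12) (fun i => b i - (s/2) * a i + (y0/2) * u i)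
      = ∏ i, (g (y0-s) (a i - u i) * g s (u i)
          * g ((s^3 + (y0-s)^3)/12) (b i - (s/2) * a i + (y0/2) * u i)) := by
    intro u
    rw [heatG_eq_prod ht, heatG_eq_prod hs, heatG_eq_prod hT, ← Finset.prod_mul_distrib,
      ← Finset.prod_mul_distrib]
    exact Finset.prod_congr rfl fun i _ => by rw [Pi.sub_apply]
  simp_rw [hpt]
  exact Integrable.fintype_prod (f := fun i x => g (y0-s) (a i - x) * g s x
      * g ((s^3 + (y0-s)^3)/12) (b i - (s/2) * a i + (y0/2) * x))
    fun i => integrable_g_triple hs hsy (a i) (b i)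

lemma continuous_heatG_fixed {n : ℕ} {t : ℝ} (ht : 0 < t) :
    Continuous (fun w : Fin n → ℝ => heatG n t w) := by
  simp only [heatG, if_pos ht]
  refine continuous_const.mul (Real.continuous_exp.comp ?_)
  exact ((continuous_finset_sum _ fun i _ => (continuous_apply i).pow 2).neg).div_const _

lemma psi_nonneg {n : ℕ} (y : Pt n) (s : ℝ) (x : (Fin n → ℝ) × (Fin n → ℝ)) :
    0 ≤ (heatG n (y.1 - s) (y.2.1 - x.1) * heatG n s x.1) *
      (heatG n ((y.1 - s)^3/12) ((y.2.2 - (s/2) • y.2.1 + (y.1/2) • x.1) - x.2)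
        * heatG n (s^3/12) x.2) :=
  mul_nonneg (mul_nonneg (heatG_nonneg _ _ _) (heatG_nonneg _ _ _))
    (mul_nonneg (heatG_nonneg _ _ _) (heatG_nonneg _ _ _))

lemma integrable_inner {n : ℕ} {y : Pt n} {s : ℝ} (hs : 0 < s) (hsy : s < y.1) :
    Integrable (fun x : (Fin n → ℝ) × (Fin n → ℝ) =>
      (heatG n (y.1 - s) (y.2.1 - x.1) * heatG n s x.1) *
      (heatG n ((y.1 - s)^3/12) ((y.2.2 - (s/2) • y.2.1 + (y.1/2) • x.1) - x.2)
        * heatG n (s^3/12) x.2)) := by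
  have ht : 0 < y.1 - s := by linarith
  have hT1 : 0 < (y.1 - s)^3/12 := by positivity
  have hT2 : 0 < s^3/12 := by positivity
  set D := (4 * π * ((y.1 - s)^3/12)) ^ (-(n : ℝ)/2) with hD
  have hDpos : 0 < D := by rw [hD]; positivity
  have hbound : Integrable (fun x : (Fin n → ℝ) × (Fin n → ℝ) =>
      D * ((heatG n (y.1 - s) (y.2.1 - x.1) * heatG n s x.1) * heatG n (s^3/12) x.2)) := by
    have hP : Integrable (fun u : Fin n → ℝ => heatG n (y.1 - s) (y.2.1 - u) * heatG n s u) :=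
      integrable_heatG_pair ht hs y.2.1
    have hQ : Integrable (fun w : Fin n → ℝ => heatG n (s^3/12) w) := integrable_heatG hT2
    have := hP.mul_prod hQ
    rw [← MeasureTheory.Measure.volume_eq_prod] at this
    exact this.const_mul D
  refine hbound.mono' ?_ ?_
  · -- measurability: continuity
    apply Continuous.aestronglyMeasurable
    have c1 : Continuous fun x : (Fin n → ℝ) × (Fin n → ℝ) =>
        heatG n (y.1 - s) (y.2.1 - x.1) :=
      (continuous_heatG_fixed ht).comp (continuous_const.sub continuous_fst)
    have c2 : Continuous fun x : (Fin n → ℝ) × (Fin n → ℝ) => heatG n s x.1 :=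
      (continuous_heatG_fixed hs).comp continuous_fst
    have c3 : Continuous fun x : (Fin n → ℝ) × (Fin n → ℝ) =>
        heatG n ((y.1 - s)^3/12) ((y.2.2 - (s/2) • y.2.1 + (y.1/2) • x.1) - x.2) := by
      refine (continuous_heatG_fixed hT1).comp ?_
      fun_prop
    have c4 : Continuous fun x : (Fin n → ℝ) × (Fin n → ℝ) => heatG n (s^3/12) x.2 :=
      (continuous_heatG_fixed hT2).comp continuous_snd
    exact (c1.mul c2).mul (c3.mul c4)
  · refine Filter.Eventually.of_forall fun x => ?_
    rw [Real.norm_eq_abs, abs_of_nonneg (psi_nonneg y s x)]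
    have h1 := heatG_le hT1 ((y.2.2 - (s/2) • y.2.1 + (y.1/2) • x.1) - x.2)
    have h2 : 0 ≤ heatG n (y.1 - s) (y.2.1 - x.1) * heatG n s x.1 * heatG n (s^3/12) x.2 :=
      mul_nonneg (mul_nonneg (heatG_nonneg _ _ _) (heatG_nonneg _ _ _)) (heatG_nonneg _ _ _)
    nlinarith [heatG_nonneg n ((y.1-s)^3/12) ((y.2.2 - (s/2) • y.2.1 + (y.1/2) • x.1) - x.2),
      heatG_nonneg n (s^3/12) x.2,
      mul_le_mul_of_nonneg_left h1 h2]

lemma inner_eq {n : ℕ} {y : Pt n} {s : ℝ} (hs : 0 < s) (hsy : s < y.1) :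
    ∫ x : (Fin n → ℝ) × (Fin n → ℝ),
      (heatG n (y.1 - s) (y.2.1 - x.1) * heatG n s x.1) *
      (heatG n ((y.1 - s)^3/12) ((y.2.2 - (s/2) • y.2.1 + (y.1/2) • x.1) - x.2)
        * heatG n (s^3/12) x.2)
      = K0 n y := by
  have ht : 0 < y.1 - s := by linarith
  have hT1 : 0 < (y.1 - s)^3/12 := by positivity
  have hT2 : 0 < s^3/12 := by positivity
  have hint := integrable_inner hs hsy (y := y)
  rw [MeasureTheory.Measure.volume_eq_prod] at hint
  rw [MeasureTheory.Measure.volume_eq_prod, MeasureTheory.integral_prod _ hint]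
  have hconv : ∀ u : Fin n → ℝ,
      ∫ w : Fin n → ℝ,
        (heatG n (y.1 - s) (y.2.1 - u) * heatG n s u) *
        (heatG n ((y.1 - s)^3/12) ((y.2.2 - (s/2) • y.2.1 + (y.1/2) • u) - w)
          * heatG n (s^3/12) w)
      = (heatG n (y.1 - s) (y.2.1 - u) * heatG n s u) *
          heatG n ((y.1 - s)^3/12 + s^3/12) (y.2.2 - (s/2) • y.2.1 + (y.1/2) • u) := by
    intro u
    rw [MeasureTheory.integral_const_mul, heatG_conv hT1 hT2]
  simp_rw [hconv]
  have hTsum : (y.1 - s)^3/12 + s^3/12 = (s^3 + (y.1 - s)^3)/12 := by ring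
  have hvec : ∀ u : Fin n → ℝ, (y.2.2 - (s/2) • y.2.1 + (y.1/2) • u)
      = fun i => y.2.2 i - (s/2) * y.2.1 i + (y.1/2) * u i := by
    intro u; funext i
    simp [Pi.add_apply, Pi.sub_apply, Pi.smul_apply, smul_eq_mul]
  simp_rw [hTsum, hvec]
  rw [heatG_triple hs hsy y.2.1 y.2.2]
  rfl

lemma K0_nonneg (n : ℕ) (z : Pt n) : 0 ≤ K0 n z :=
  mul_nonneg (heatG_nonneg _ _ _) (heatG_nonneg _ _ _)

lemma gmul_neg_fst {n : ℕ} (z y : Pt n) : (gmul (-z) y).1 = y.1 - z.1 := by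
  simp [gmul, sub_eq_add_neg]

lemma H_eq {n : ℕ} (f : ℝ → ℝ) (y z : Pt n) :
    K0 n (gmul (-z) y) * f z.1 * K0 n z
      = f z.1 * ((heatG n (y.1 - z.1) (y.2.1 - z.2.1) * heatG n z.1 z.2.1) *
        (heatG n ((y.1 - z.1)^3/12) ((y.2.2 - (z.1/2) • y.2.1 + (y.1/2) • z.2.1) - z.2.2) *
          heatG n (z.1^3/12) z.2.2)) := by
  have h1 : (gmul (-z) y).1 = y.1 - z.1 := gmul_neg_fst z y
  have h2 : (gmul (-z) y).2.1 = y.2.1 - z.2.1 := by simp [gmul, sub_eq_add_neg]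
  have h3 : (gmul (-z) y).2.2
      = (y.2.2 - (z.1/2) • y.2.1 + (y.1/2) • z.2.1) - z.2.2 := by
    simp only [gmul, Prod.fst_neg, Prod.snd_neg]
    funext i
    simp only [Pi.add_apply, Pi.sub_apply, Pi.neg_apply, Pi.smul_apply, smul_eq_mul]
    ring
  rw [K0, K0, h1, h2, h3]
  ring

lemma H_zero {n : ℕ} (f : ℝ → ℝ) (y z : Pt n) (h : z.1 ≤ 0 ∨ y.1 ≤ z.1) :
    K0 n (gmul (-z) y) * f z.1 * K0 n z = 0 := by
  rcases h with h | h
  · have : K0 n z = 0 := by rw [K0, heatG_of_nonpos h, zero_mul]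
    rw [this, mul_zero]
  · have : K0 n (gmul (-z) y) = 0 := by
      rw [K0, gmul_neg_fst, heatG_of_nonpos (by linarith), zero_mul]
    rw [this, zero_mul, zero_mul]

lemma continuousOn_heatG_comp {n : ℕ} {α : Type*} [TopologicalSpace α]
    {τ : α → ℝ} {ω : α → Fin n → ℝ} {U : Set α}
    (hτ : ContinuousOn τ U) (hω : ContinuousOn ω U) (hpos : ∀ x ∈ U, 0 < τ x) :
    ContinuousOn (fun x => heatG n (τ x) (ω x)) U := by
  have hform : ∀ x ∈ U, (4 * π * τ x) ^ (-(n : ℝ)/2)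
      * Real.exp (-(∑ i, ω x i ^ 2) / (4 * τ x)) = heatG n (τ x) (ω x) := by
    intro x hx
    rw [heatG, if_pos (hpos x hx)]
  refine ContinuousOn.congr ?_ fun x hx => (hform x hx).symm
  have hbase : ContinuousOn (fun x => 4 * π * τ x) U := continuousOn_const.mul hτ
  have h1 : ContinuousOn (fun x => (4 * π * τ x) ^ (-(n : ℝ)/2)) U := by
    refine ContinuousOn.rpow_const hbase fun x hx => Or.inl ?_
    have := hpos x hx
    positivity
  have h2 : ContinuousOn (fun x => Real.exp (-(∑ i, ω x i ^ 2) / (4 * τ x))) U := by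
    refine Real.continuous_exp.comp_continuousOn (ContinuousOn.div ?_ ?_ ?_)
    · refine ContinuousOn.neg (continuousOn_finset_sum _ fun i _ => ?_)
      exact ((continuous_apply i).comp_continuousOn hω).pow 2
    · exact continuousOn_const.mul hτ
    · intro x hx
      have := hpos x hx
      positivity
  exact h1.mul h2

end S3Aux

open S3Aux

/-- For `f ∈ C([0,∞))` and `F(t) = ∫₀ᵗ f`, one has
`∫ K₀(z⁻¹⬝y) f(z₀) K₀(z) dz = F(y₀) K₀(y)` whenever `y₀ > 0`. -/
theorem statement3 (n : ℕ) (f : ℝ → ℝ) (hf : ContinuousOn f (Set.Ici 0))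
    (y : Pt n) (hy : 0 < y.1) :
    ∫ z : Pt n, K0 n (gmul (-z) y) * f z.1 * K0 n z
      = (∫ s in (0 : ℝ)..y.1, f s) * K0 n y := by

  classical
  set H : Pt n → ℝ := fun z => K0 n (gmul (-z) y) * f z.1 * K0 n z with hHdef
  set U : Set (Pt n) := {z | 0 < z.1 ∧ z.1 < y.1} with hUdef
  have hUopen : IsOpen U := by
    have : U = (fun z : Pt n => z.1) ⁻¹' (Set.Ioo 0 y.1) := rfl
    rw [this]
    exact isOpen_Ioo.preimage continuous_fst
  have hHzero : ∀ z ∉ U, H z = 0 := by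
    intro z hz
    apply H_zero
    rcases not_and_or.mp hz with h | h
    · exact Or.inl (not_lt.mp h)
    · exact Or.inr (not_lt.mp h)
  have hHU : H = U.indicator H := by
    funext z
    by_cases hz : z ∈ U
    · rw [Set.indicator_of_mem hz]
    · rw [Set.indicator_of_notMem hz, hHzero z hz]
  -- continuity of H on U
  have hHcont : ContinuousOn H U := by
    have hfc : ContinuousOn (fun z : Pt n => f z.1) U := by
      refine hf.comp continuous_fst.continuousOn fun z hz => ?_
      exact le_of_lt hz.1
    have hA : ContinuousOn (fun z : Pt n => heatG n (y.1 - z.1) (y.2.1 - z.2.1)) U := by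
      refine continuousOn_heatG_comp ?_ ?_ fun z hz => by linarith [hz.2]
      · exact (continuous_const.sub continuous_fst).continuousOn
      · exact (continuous_const.sub (continuous_fst.comp continuous_snd)).continuousOn
    have hB : ContinuousOn (fun z : Pt n => heatG n z.1 z.2.1) U := by
      refine continuousOn_heatG_comp continuous_fst.continuousOn
        (continuous_fst.comp continuous_snd).continuousOn fun z hz => hz.1
    have hC : ContinuousOn (fun z : Pt n =>
        heatG n ((y.1 - z.1)^3/12)
          ((y.2.2 - (z.1/2) • y.2.1 + (y.1/2) • z.2.1) - z.2.2)) U := by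
      refine continuousOn_heatG_comp ?_ ?_ fun z hz => by
        have : 0 < y.1 - z.1 := by linarith [hz.2]
        positivity
      · exact (((continuous_const.sub continuous_fst).pow 3).div_const 12).continuousOn
      · refine Continuous.continuousOn ?_
        refine Continuous.sub (Continuous.add (Continuous.sub continuous_const ?_) ?_) ?_
        · exact (continuous_fst.div_const 2).smul continuous_const
        · fun_prop
        · exact continuous_snd.comp continuous_snd
    have hD : ContinuousOn (fun z : Pt n => heatG n (z.1^3/12) z.2.2) U := by
      refine continuousOn_heatG_comp ((continuous_fst.pow 3).div_const 12).continuousOn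
        (continuous_snd.comp continuous_snd).continuousOn fun z hz => by
          have := hz.1; positivity
    have : ContinuousOn (fun z : Pt n =>
        f z.1 * ((heatG n (y.1 - z.1) (y.2.1 - z.2.1) * heatG n z.1 z.2.1) *
          (heatG n ((y.1 - z.1)^3/12) ((y.2.2 - (z.1/2) • y.2.1 + (y.1/2) • z.2.1) - z.2.2) *
            heatG n (z.1^3/12) z.2.2))) U :=
      hfc.mul ((hA.mul hB).mul (hC.mul hD))
    exact this.congr fun z hz => H_eq f y z
  have hasm : AEStronglyMeasurable H (volume : Measure (Pt n)) := by
    rw [hHU]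
    exact (aestronglyMeasurable_indicator_iff hUopen.measurableSet).mpr
      (hHcont.aestronglyMeasurable hUopen.measurableSet)
  -- bound for f on [0, y.1]
  obtain ⟨M, hM⟩ := (isCompact_Icc (a := (0:ℝ)) (b := y.1)).exists_bound_of_continuousOn
    (hf.mono (fun s hs => hs.1))
  -- slice integrals
  have hslice : ∀ s : ℝ, s ∈ Set.Ioo 0 y.1 →
      (∫ x : (Fin n → ℝ) × (Fin n → ℝ), H (s, x)) = f s * K0 n y := by
    intro s hs
    have : ∀ x : (Fin n → ℝ) × (Fin n → ℝ), H (s, x)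
        = f s * ((heatG n (y.1 - s) (y.2.1 - x.1) * heatG n s x.1) *
          (heatG n ((y.1 - s)^3/12) ((y.2.2 - (s/2) • y.2.1 + (y.1/2) • x.1) - x.2)
            * heatG n (s^3/12) x.2)) := fun x => H_eq f y (s, x)
    simp_rw [this]
    rw [MeasureTheory.integral_const_mul, inner_eq hs.1 hs.2]
  have hslice_norm : ∀ s : ℝ, s ∈ Set.Ioo 0 y.1 →
      (∫ x : (Fin n → ℝ) × (Fin n → ℝ), ‖H (s, x)‖) = |f s| * K0 n y := by
    intro s hs
    have : ∀ x : (Fin n → ℝ) × (Fin n → ℝ), ‖H (s, x)‖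
        = |f s| * ((heatG n (y.1 - s) (y.2.1 - x.1) * heatG n s x.1) *
          (heatG n ((y.1 - s)^3/12) ((y.2.2 - (s/2) • y.2.1 + (y.1/2) • x.1) - x.2)
            * heatG n (s^3/12) x.2)) := by
      intro x
      rw [show H (s, x) = f s * ((heatG n (y.1 - s) (y.2.1 - x.1) * heatG n s x.1) *
          (heatG n ((y.1 - s)^3/12) ((y.2.2 - (s/2) • y.2.1 + (y.1/2) • x.1) - x.2)
            * heatG n (s^3/12) x.2)) from H_eq f y (s, x),
        Real.norm_eq_abs, abs_mul, abs_of_nonneg (psi_nonneg y s x)]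
    simp_rw [this]
    rw [MeasureTheory.integral_const_mul, inner_eq hs.1 hs.2]
  have hslice_zero : ∀ s : ℝ, s ∉ Set.Ioo 0 y.1 →
      (fun x : (Fin n → ℝ) × (Fin n → ℝ) => H (s, x)) = 0 := by
    intro s hs
    funext x
    refine hHzero (s, x) ?_
    exact fun h => hs ⟨h.1, h.2⟩
  -- integrability of H
  have hHint : Integrable H (volume : Measure (Pt n)) := by
    rw [MeasureTheory.Measure.volume_eq_prod] at hasm ⊢
    refine (MeasureTheory.integrable_prod_iff hasm).mpr ⟨?_, ?_⟩
    · refine Filter.Eventually.of_forall fun s => ?_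
      by_cases hs : s ∈ Set.Ioo 0 y.1
      · have : ∀ x : (Fin n → ℝ) × (Fin n → ℝ), H (s, x)
            = f s * ((heatG n (y.1 - s) (y.2.1 - x.1) * heatG n s x.1) *
              (heatG n ((y.1 - s)^3/12) ((y.2.2 - (s/2) • y.2.1 + (y.1/2) • x.1) - x.2)
                * heatG n (s^3/12) x.2)) := fun x => H_eq f y (s, x)
        simp_rw [this]
        exact (integrable_inner hs.1 hs.2).const_mul (f s)
      · rw [hslice_zero s hs]
        exact integrable_zero _ _ _
    · have heq : (fun s => ∫ x : (Fin n → ℝ) × (Fin n → ℝ), ‖H (s, x)‖)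
          = Set.indicator (Set.Ioo 0 y.1) (fun s => |f s| * K0 n y) := by
        funext s
        by_cases hs : s ∈ Set.Ioo 0 y.1
        · rw [Set.indicator_of_mem hs, hslice_norm s hs]
        · have hz : ∀ x : (Fin n → ℝ) × (Fin n → ℝ), H (s, x) = 0 :=
            fun x => congrFun (hslice_zero s hs) x
          rw [Set.indicator_of_notMem hs]
          simp [hz]
      rw [heq]
      refine MeasureTheory.Integrable.mono'
        (g := Set.indicator (Set.Ioo 0 y.1) (fun _ => M * K0 n y)) ?_ ?_ ?_
      · rw [MeasureTheory.integrable_indicator_iff measurableSet_Ioo]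
        exact MeasureTheory.integrableOn_const measure_Ioo_lt_top.ne
      · refine (aestronglyMeasurable_indicator_iff measurableSet_Ioo).mpr ?_
        refine ContinuousOn.aestronglyMeasurable ?_ measurableSet_Ioo
        exact ((hf.mono fun s hs => le_of_lt hs.1).abs).mul continuousOn_const
      · refine Filter.Eventually.of_forall fun s => ?_
        by_cases hs : s ∈ Set.Ioo 0 y.1
        · rw [Set.indicator_of_mem hs, Set.indicator_of_mem hs, Real.norm_eq_abs,
            abs_of_nonneg (mul_nonneg (abs_nonneg _) (K0_nonneg n y))]
          refine mul_le_mul_of_nonneg_right ?_ (K0_nonneg n y)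
          have := hM s ⟨le_of_lt hs.1, le_of_lt hs.2⟩
          rwa [Real.norm_eq_abs] at this
        · rw [Set.indicator_of_notMem hs, Set.indicator_of_notMem hs]
          simp
  -- main computation
  calc ∫ z : Pt n, K0 n (gmul (-z) y) * f z.1 * K0 n z
      = ∫ z : Pt n, H z := rfl
    _ = ∫ s : ℝ, ∫ x : (Fin n → ℝ) × (Fin n → ℝ), H (s, x) := by
        rw [MeasureTheory.Measure.volume_eq_prod] at hHint ⊢
        exact MeasureTheory.integral_prod H hHint
    _ = ∫ s : ℝ, Set.indicator (Set.Ioo 0 y.1) (fun s => f s * K0 n y) s := by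
        refine MeasureTheory.integral_congr_ae (Filter.Eventually.of_forall fun s => ?_)
        dsimp only
        by_cases hs : s ∈ Set.Ioo 0 y.1
        · rw [Set.indicator_of_mem hs, hslice s hs]
        · have hz : ∀ x : (Fin n → ℝ) × (Fin n → ℝ), H (s, x) = 0 :=
            fun x => congrFun (hslice_zero s hs) x
          rw [Set.indicator_of_notMem hs]
          simp [hz]
    _ = ∫ s in Set.Ioo 0 y.1, f s * K0 n y := by
        rw [MeasureTheory.integral_indicator measurableSet_Ioo]
    _ = (∫ s in Set.Ioo 0 y.1, f s) * K0 n y := by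
        rw [MeasureTheory.integral_mul_const]
    _ = (∫ s in (0:ℝ)..y.1, f s) * K0 n y := by
        rw [intervalIntegral.integral_of_le (le_of_lt hy),
          MeasureTheory.integral_Ioc_eq_integral_Ioo]


end
end
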